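/- Let Q be a (+k)-path subset of U^{s,t} (with U as above), with first point in P^α and last point in P^β. Then the number of indices γ with α < γ < β such that |Q ∩ P^γ| ≥ 2 is at most ⌊k/2⌋; if instead Q is a (−k)-path, this number is at most ⌊(k−1)/2⌋. -/

import Mathlib

def Generic (S : Finset (ℝ × ℝ)) : Prop :=
  ∀ p ∈ S, ∀ q ∈ S, p ≠ q → p.1 ≠ q.1 ∧ p.2 ≠ q.2

def IncChain (P : Finset (ℝ × ℝ)) : Prop :=
  ∀ p ∈ P, ∀ q ∈ P, p ≠ q → (p.1 < q.1 ∧ p.2 < q.2) ∨ (q.1 < p.1 ∧ q.2 < p.2)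

def DecChain (P : Finset (ℝ × ℝ)) : Prop :=
  ∀ p ∈ P, ∀ q ∈ P, p ≠ q → (p.1 < q.1 ∧ q.2 < p.2) ∨ (q.1 < p.1 ∧ p.2 < q.2)

/-- Sections of a signed k-modal path: x-consecutive, with the even-indexed
sections increasing iff up = true, and alternating monotonicities. -/
def SignedSections (k : ℕ) (up : Bool) (F : Fin (k + 1) → Finset (ℝ × ℝ)) : Prop :=
  (∀ i j : Fin (k + 1), i < j → ∀ p ∈ F i, ∀ q ∈ F j, p.1 < q.1) ∧
  (∀ j : Fin (k + 1), if decide ((j : ℕ) % 2 = 0) = up then IncChain (F j) else DecChain (F j))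

/-- P is a (+k)-path (up = true) or a (−k)-path (up = false). -/
def IsSignedModalPath (k : ℕ) (up : Bool) (P : Finset (ℝ × ℝ)) : Prop :=
  ∃ F : Fin (k + 1) → Finset (ℝ × ℝ),
    (∀ p ∈ P, ∃ i, p ∈ F i) ∧ (∀ i, F i ⊆ P) ∧ SignedSections k up F

def IsModalPath (k : ℕ) (P : Finset (ℝ × ℝ)) : Prop :=
  ∃ up : Bool, IsSignedModalPath k up P

/-- Length profile of the decreasing chains in the construction U^{s,t}:
t, t+1, ..., 2t−1, then 2t (s times), then 2t−1, ..., t+1, t. -/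
def chainLen (s t i : ℕ) : ℕ :=
  if i < t then t + i else if i < t + s then 2 * t else 3 * t + s - 1 - i


/-- Auxiliary lemma: for a signed k-modal path, every index γ strictly between
α and β whose chain meets Q twice yields a decreasing section strictly between
the first and last section; these give an injection into a set of size B. -/
lemma aux15 (s t k : ℕ) (up : Bool) (B : ℕ)
    (P : Fin (s + 2 * t) → Finset (ℝ × ℝ))
    (hdec : ∀ i, DecChain (P i))
    (hcomp : ∀ i j : Fin (s + 2 * t), i < j →
      ∀ p ∈ P i, ∀ q ∈ P j, p.1 < q.1 ∧ p.2 < q.2)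
    (Q : Finset (ℝ × ℝ))
    (α β : Fin (s + 2 * t)) (fp lp : ℝ × ℝ)
    (hfpQ : fp ∈ Q) (hfpP : fp ∈ P α) (hlpQ : lp ∈ Q) (hlpP : lp ∈ P β)
    (hpath : IsSignedModalPath k up Q)
    (hB : ∀ j : ℕ, 0 < j → j < k → decide (j % 2 = 0) ≠ up → (j - 1) / 2 < B) :
    (Finset.univ.filter (fun γ : Fin (s + 2 * t) =>
        α < γ ∧ γ < β ∧ 2 ≤ (Q ∩ P γ).card)).card ≤ B := by
  classical
  obtain ⟨F, hF, hFQ, hx, hsec⟩ := hpath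
  obtain ⟨c, hc⟩ := hF fp hfpQ
  obtain ⟨d, hd⟩ := hF lp hlpQ
  set G := (Finset.univ.filter (fun γ : Fin (s + 2 * t) =>
        α < γ ∧ γ < β ∧ 2 ≤ (Q ∩ P γ).card)) with hG
  have hwit : ∀ γ, γ ∈ G → ∃ (pp qq : ℝ × ℝ) (a b e : Fin (k + 1)),
      pp ∈ Q ∧ pp ∈ P γ ∧ qq ∈ Q ∧ qq ∈ P γ ∧ pp ∈ F a ∧ qq ∈ F b ∧ pp.1 < qq.1 ∧
      (a : ℕ) ≤ (e : ℕ) ∧ (e : ℕ) ≤ (b : ℕ) ∧ 0 < (e : ℕ) ∧ (e : ℕ) < k ∧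
      decide ((e : ℕ) % 2 = 0) ≠ up := by
    intro γ hγ
    rw [hG, Finset.mem_filter] at hγ
    obtain ⟨-, hαγ, hγβ, hcard⟩ := hγ
    obtain ⟨p0, hp0, q0, hq0, hne0⟩ := Finset.one_lt_card.mp (show 1 < (Q ∩ P γ).card by omega)
    rw [Finset.mem_inter] at hp0 hq0
    obtain ⟨p, q, hpQ, hpP, hqQ, hqP, hlt1, hlt2⟩ :
        ∃ p q : ℝ × ℝ, p ∈ Q ∧ p ∈ P γ ∧ q ∈ Q ∧ q ∈ P γ ∧ p.1 < q.1 ∧ q.2 < p.2 := by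
      rcases hdec γ p0 hp0.2 q0 hq0.2 hne0 with h | h
      · exact ⟨p0, q0, hp0.1, hp0.2, hq0.1, hq0.2, h.1, h.2⟩
      · exact ⟨q0, p0, hq0.1, hq0.2, hp0.1, hp0.2, h.1, h.2⟩
    obtain ⟨a, ha⟩ := hF p hpQ
    obtain ⟨b, hb⟩ := hF q hqQ
    have hab : (a : ℕ) ≤ (b : ℕ) := by
      by_contra h
      exact absurd (hx b a (Fin.lt_def.mpr (by omega)) q hb p ha) (by linarith)
    have hfpp := hcomp α γ hαγ fp hfpP p hpP
    have hqlp := hcomp γ β hγβ q hqP lp hlpP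
    have hca : (c : ℕ) ≤ (a : ℕ) := by
      by_contra h
      exact absurd (hx a c (Fin.lt_def.mpr (by omega)) p ha fp hc) (by linarith [hfpp.1])
    have hbd : (b : ℕ) ≤ (d : ℕ) := by
      by_contra h
      exact absurd (hx d b (Fin.lt_def.mpr (by omega)) lp hd q hb) (by linarith [hqlp.1])
    -- common contradiction: fp and p in the same decreasing section
    have pieceA : ∀ e : Fin (k + 1), DecChain (F e) → (a : ℕ) ≤ (e : ℕ) → 0 < (e : ℕ) := by
      intro e hde hae
      by_contra h
      have he0 : (e : ℕ) = 0 := by omega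
      have hEa : a = e := Fin.val_injective (by omega)
      have hEc : c = e := Fin.val_injective (by omega)
      have hne : fp ≠ p := by
        intro hEq; rw [hEq] at hfpp; exact lt_irrefl _ hfpp.1
      rcases hde fp (hEc ▸ hc) p (hEa ▸ ha) hne with h1 | h1
      · linarith [h1.2, hfpp.2]
      · linarith [h1.1, hfpp.1]
    by_cases hb2 : decide ((b : ℕ) % 2 = 0) = up
    · -- section b is increasing; use e = b - 1
      have hinc : IncChain (F b) := by
        have := hsec b; rwa [if_pos hb2] at this
      have haltb : (a : ℕ) < (b : ℕ) := by
        rcases Nat.lt_or_ge (a : ℕ) (b : ℕ) with h | h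
        · exact h
        · exfalso
          have hEq : a = b := Fin.val_injective (by omega)
          have hne : p ≠ q := by
            intro hEq2; rw [hEq2] at hlt1; exact lt_irrefl _ hlt1
          rcases hinc p (hEq ▸ ha) q hb hne with h1 | h1
          · linarith [h1.2]
          · linarith [h1.1]
      have hbk : (b : ℕ) ≤ k := by omega
      refine ⟨p, q, a, b, ⟨(b : ℕ) - 1, by omega⟩, hpQ, hpP, hqQ, hqP, ha, hb, hlt1,
        ?_, ?_, ?_, ?_, ?_⟩
      · show (a : ℕ) ≤ (b : ℕ) - 1; omega
      · show (b : ℕ) - 1 ≤ (b : ℕ); omega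
      · refine pieceA _ ?_ (show (a : ℕ) ≤ (b : ℕ) - 1 by omega)
        have hpar : decide (((b : ℕ) - 1) % 2 = 0) ≠ up := by
          intro h
          have := decide_eq_decide.mp (h.trans hb2.symm)
          omega
        have := hsec ⟨(b : ℕ) - 1, by omega⟩
        rwa [if_neg hpar] at this
      · show (b : ℕ) - 1 < k; omega
      · show decide (((b : ℕ) - 1) % 2 = 0) ≠ up
        intro h
        have := decide_eq_decide.mp (h.trans hb2.symm)
        omega
    · -- section b is decreasing; use e = b
      have hdecb : DecChain (F b) := by
        have := hsec b; rwa [if_neg hb2] at this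
      have hbk : (b : ℕ) < k := by
        by_contra h
        have hbk' : (b : ℕ) = k := by omega
        have hEd : d = b := Fin.val_injective (by omega)
        have hne : q ≠ lp := by
          intro hEq; rw [hEq] at hqlp; exact lt_irrefl _ hqlp.1
        rcases hdecb q hb lp (hEd ▸ hd) hne with h1 | h1
        · linarith [h1.2, hqlp.2]
        · linarith [h1.1, hqlp.1]
      exact ⟨p, q, a, b, b, hpQ, hpP, hqQ, hqP, ha, hb, hlt1, hab, le_refl _,
        pieceA b hdecb hab, hbk, hb2⟩
  choose! pw qw aw bw ew hw1 hw2 hw3 hw4 hw5 hw6 hw7 hw8 hw9 hw10 hw11 hw12 using hwit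
  have cross : ∀ γ₁ γ₂, γ₁ ∈ G → γ₂ ∈ G → γ₁ < γ₂ → (ew γ₁ : ℕ) < (ew γ₂ : ℕ) := by
    intro γ₁ γ₂ hg1 hg2 hlt
    have hqp := hcomp γ₁ γ₂ hlt (qw γ₁) (hw4 γ₁ hg1) (pw γ₂) (hw2 γ₂ hg2)
    have hba : (bw γ₁ : ℕ) ≤ (aw γ₂ : ℕ) := by
      by_contra h
      exact absurd (hx (aw γ₂) (bw γ₁) (Fin.lt_def.mpr (by omega))
        (pw γ₂) (hw5 γ₂ hg2) (qw γ₁) (hw6 γ₁ hg1)) (by linarith [hqp.1])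
    by_contra hcon
    have h8 := hw8 γ₂ hg2
    have h9 := hw9 γ₁ hg1
    have heb : (ew γ₁ : ℕ) = (bw γ₁ : ℕ) := by omega
    have hEba : bw γ₁ = aw γ₂ := Fin.val_injective (by omega)
    have hpar : decide ((bw γ₁ : ℕ) % 2 = 0) ≠ up := by
      have := hw12 γ₁ hg1
      rwa [heb] at this
    have hdecb : DecChain (F (bw γ₁)) := by
      have := hsec (bw γ₁); rwa [if_neg hpar] at this
    have hne : qw γ₁ ≠ pw γ₂ := by
      intro hEq; rw [hEq] at hqp; exact lt_irrefl _ hqp.1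
    rcases hdecb (qw γ₁) (hw6 γ₁ hg1) (pw γ₂) (hEba ▸ hw5 γ₂ hg2) hne with h1 | h1
    · linarith [h1.2, hqp.2]
    · linarith [h1.1, hqp.1]
  calc G.card ≤ (Finset.range B).card := by
        apply Finset.card_le_card_of_injOn (fun γ => ((ew γ : ℕ) - 1) / 2)
        · intro γ hγ
          rw [Finset.mem_coe, Finset.mem_range]
          exact hB _ (hw10 γ hγ) (hw11 γ hγ) (hw12 γ hγ)
        · intro γ₁ hg1 γ₂ hg2 heq
          rw [Finset.mem_coe] at hg1 hg2
          simp only at heq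
          rcases lt_trichotomy γ₁ γ₂ with h | h | h
          · exfalso
            have hlt := cross γ₁ γ₂ hg1 hg2 h
            have hbe : decide ((ew γ₁ : ℕ) % 2 = 0) = decide ((ew γ₂ : ℕ) % 2 = 0) := by
              have p1 := hw12 γ₁ hg1
              have p2 := hw12 γ₂ hg2
              revert p1 p2
              cases up <;> cases hA : decide ((ew γ₁ : ℕ) % 2 = 0) <;>
                cases hB' : decide ((ew γ₂ : ℕ) % 2 = 0) <;> simp
            have hio := decide_eq_decide.mp hbe
            have h10 := hw10 γ₁ hg1
            omega
          · exact h
          · exfalso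
            have hlt := cross γ₂ γ₁ hg2 hg1 h
            have hbe : decide ((ew γ₁ : ℕ) % 2 = 0) = decide ((ew γ₂ : ℕ) % 2 = 0) := by
              have p1 := hw12 γ₁ hg1
              have p2 := hw12 γ₂ hg2
              revert p1 p2
              cases up <;> cases hA : decide ((ew γ₁ : ℕ) % 2 = 0) <;>
                cases hB' : decide ((ew γ₂ : ℕ) % 2 = 0) <;> simp
            have hio := decide_eq_decide.mp hbe
            have h10 := hw10 γ₂ hg2
            omega
    _ = B := Finset.card_range B

theorem stmt15 (s t k : ℕ) (hs : 1 ≤ s) (ht : 1 ≤ t) (hk : 1 ≤ k)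
    (P : Fin (s + 2 * t) → Finset (ℝ × ℝ))
    (hdec : ∀ i, DecChain (P i))
    (hcard : ∀ i : Fin (s + 2 * t), (P i).card = chainLen s t (i : ℕ))
    (hcomp : ∀ i j : Fin (s + 2 * t), i < j →
      ∀ p ∈ P i, ∀ q ∈ P j, p.1 < q.1 ∧ p.2 < q.2)
    (Q : Finset (ℝ × ℝ)) (hQ : Q ⊆ Finset.univ.biUnion P)
    (α β : Fin (s + 2 * t)) (fp lp : ℝ × ℝ)
    (hfp : fp ∈ Q ∧ fp ∈ P α ∧ ∀ q ∈ Q, fp.1 ≤ q.1)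
    (hlp : lp ∈ Q ∧ lp ∈ P β ∧ ∀ q ∈ Q, q.1 ≤ lp.1) :
    (IsSignedModalPath k true Q →
      (Finset.univ.filter (fun γ : Fin (s + 2 * t) =>
        α < γ ∧ γ < β ∧ 2 ≤ (Q ∩ P γ).card)).card ≤ k / 2) ∧
    (IsSignedModalPath k false Q →
      (Finset.univ.filter (fun γ : Fin (s + 2 * t) =>
        α < γ ∧ γ < β ∧ 2 ≤ (Q ∩ P γ).card)).card ≤ (k - 1) / 2) := by
  constructor
  · intro hpath
    refine aux15 s t k true (k / 2) P hdec hcomp Q α β fp lp hfp.1 hfp.2.1 hlp.1 hlp.2.1 hpath ?_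
    intro j hj1 hj2 hj3
    simp only [ne_eq, decide_eq_true_eq] at hj3
    omega
  · intro hpath
    refine aux15 s t k false ((k - 1) / 2) P hdec hcomp Q α β fp lp hfp.1 hfp.2.1 hlp.1 hlp.2.1 hpath ?_
    intro j hj1 hj2 hj3
    simp only [ne_eq, decide_eq_false_iff_not, not_not] at hj3
    omega
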